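/- Let n, k be positive integers with k ≥ n, and let y ∈ ℝ^k satisfy y_k ≠ 0 (last entry nonzero). Suppose z, z' ∈ ℝ^{n+k} both have last k entries equal to y, i.e. z_{n+l} = z'_{n+l} = y_l for l = 1,…,k. If the (linear) autocorrelations of z and z' agree at lags t = n, n+1, …, n+k−1, i.e. a_t(z) = a_t(z') for those t, then z = z'. (In particular, a signal x ∈ ℝⁿ combined with known background y is uniquely determined by the autocorrelation of (x; y).) -/
import Mathlib


/-- Linear autocorrelation at lag `t` of a length-`N` real vector
(entries indexed `0, …, N-1`): `a_t(z) = ∑_{p=0}^{N-t-1} z_p z_{p+t}`. -/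
noncomputable def acorr (N : ℕ) (z : ℕ → ℝ) (t : ℕ) : ℝ :=
  ∑ p ∈ Finset.range (N - t), z p * z (p + t)

/-- If `z, z' ∈ ℝ^{n+k}` both have their last `k` entries equal to the background `y`
(with `k ≥ n` and last entry of `y` nonzero), and their linear autocorrelations agree
at lags `t = n, …, n+k-1`, then `z = z'`. -/
theorem stmt0 (n k : ℕ) (hn : 0 < n) (hk : n ≤ k)
    (y : ℕ → ℝ) (hy : y (k - 1) ≠ 0)
    (z z' : ℕ → ℝ)
    (hz : ∀ l < k, z (n + l) = y l)
    (hz' : ∀ l < k, z' (n + l) = y l)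
    (ha : ∀ t, n ≤ t → t ≤ n + k - 1 → acorr (n + k) z t = acorr (n + k) z' t) :
    ∀ i < n + k, z i = z' i := by
  have key : ∀ i, i < n → z i = z' i := by
    intro i
    induction i using Nat.strong_induction_on with
    | _ i IH =>
      intro hi
      set d := k - 1 - i with hd
      have h := ha (n + d) (Nat.le_add_right _ _) (by omega)
      unfold acorr at h
      have hrange : n + k - (n + d) = i + 1 := by omega
      rw [hrange] at h
      have hsum : ∀ w : ℕ → ℝ, (∀ l < k, w (n + l) = y l) →
          ∑ p ∈ Finset.range (i + 1), w p * w (p + (n + d))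
            = ∑ p ∈ Finset.range (i + 1), w p * y (p + d) := by
        intro w hw
        refine Finset.sum_congr rfl fun p hp => ?_
        have hp' : p < i + 1 := Finset.mem_range.mp hp
        have : p + (n + d) = n + (p + d) := by ring
        rw [this, hw (p + d) (by omega)]
      rw [hsum z hz, hsum z' hz'] at h
      rw [Finset.sum_range_succ, Finset.sum_range_succ] at h
      have heq : ∑ p ∈ Finset.range i, z p * y (p + d)
          = ∑ p ∈ Finset.range i, z' p * y (p + d) := by
        refine Finset.sum_congr rfl fun p hp => ?_
        have hp' : p < i := Finset.mem_range.mp hp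
        rw [IH p hp' (by omega)]
      rw [heq] at h
      have h2 : z i * y (i + d) = z' i * y (i + d) := by linarith
      have hid : i + d = k - 1 := by omega
      rw [hid] at h2
      exact mul_right_cancel₀ hy h2
  intro i hik
  by_cases hin : i < n
  · exact key i hin
  · have : i = n + (i - n) := by omega
    rw [this, hz _ (by omega), hz' _ (by omega)]
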